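/- Let Ω = (0,1)³ ∖ [½,1)³ ⊂ ℝ³ (a non-convex domain). For s ∈ (−½,½), let z_1(s) = (0,0,s), z_2(s) = (0,0,1+s) and w = (0,0). Then C_1((z_1(s),z_2(s)),w) = {x ∈ Ω : x·e₃ ≤ ½ + s}, and its Lebesgue measure is L³(C_1((z_1(s),z_2(s)),w)) = ½ + s if s ∈ (−½,0] and ½ + (3/4)s if s ∈ (0,½). In particular, the function s ↦ L³(C_1((z_1(s),z_2(s)),w)) is not differentiable at s = 0, so the Laguerre-cell volume map fails to be differentiable for non-convex domains. -/

import Mathlib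

open MeasureTheory Set Filter
open scoped ENNReal Topology RealInnerProductSpace

noncomputable section

/-- Geostrophic space: `ℝ³` with the Euclidean norm. -/
abbrev E3 : Type := EuclideanSpace ℝ (Fin 3)

/-- The matrix `J` encoding planetary rotation: `J₁₂ = -1`, `J₂₁ = 1`, all other entries `0`. -/
def matJ : Matrix (Fin 3) (Fin 3) ℝ := !![0, -1, 0; 1, 0, 0; 0, 0, 0]

/-- `J` as a (continuous) linear map on `ℝ³`. -/
def J : E3 →L[ℝ] E3 := LinearMap.toContinuousLinearMap (Matrix.toEuclideanLin matJ)

/-- The Laguerre cell `C_i(z, w)` of `Ω` generated by seeds `z` and weights `w`. -/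
def lagCell {N : ℕ} (Ω : Set E3) (z : Fin N → E3) (w : Fin N → ℝ) (i : Fin N) : Set E3 :=
  {x | x ∈ Ω ∧ ∀ j, ‖x - z i‖ ^ 2 - w i ≤ ‖x - z j‖ ^ 2 - w j}

/-- The non-convex domain `Ω = (0,1)³ \ [½,1)³`. -/
def nonConvexDomain : Set E3 :=
  {x : E3 | ∀ i, x i ∈ Ioo (0:ℝ) 1} \ {x : E3 | ∀ i, x i ∈ Ico (1/2 : ℝ) 1}

/-- The two seeds `z₁(s) = (0,0,s)` and `z₂(s) = (0,0,1+s)`. -/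
def seedsVert (s : ℝ) : Fin 2 → E3 :=
  ![EuclideanSpace.single 2 s, EuclideanSpace.single 2 (1 + s)]

/-- The volume of the first Laguerre cell of `(0,1)³ \ [½,1)³` generated by
`((0,0,s), (0,0,1+s))` with zero weights. -/
def cellVol (s : ℝ) : ℝ :=
  (volume (lagCell nonConvexDomain (seedsVert s) ![0, 0] 0)).toReal

lemma norm_sub_single_sq (x : E3) (a : ℝ) :
    ‖x - EuclideanSpace.single 2 a‖ ^ 2 = (x 0)^2 + (x 1)^2 + (x 2 - a)^2 := by
  rw [EuclideanSpace.norm_eq, Real.sq_sqrt (by positivity)]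
  simp [Fin.sum_univ_three, EuclideanSpace.single_apply, sq_abs]

lemma cell_eq (s : ℝ) :
    lagCell nonConvexDomain (seedsVert s) ![0, 0] 0
      = {x : E3 | x ∈ nonConvexDomain ∧ x 2 ≤ 1/2 + s} := by
  ext x
  simp only [lagCell, seedsVert, mem_setOf_eq, Fin.forall_fin_two,
    Matrix.cons_val_zero, Matrix.cons_val_one, Matrix.head_cons, sub_zero, le_refl, true_and]
  rw [norm_sub_single_sq, norm_sub_single_sq]
  constructor
  · rintro ⟨hx, h⟩
    exact ⟨hx, by nlinarith⟩
  · rintro ⟨hx, h⟩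
    exact ⟨hx, by nlinarith⟩

lemma vol_slab (s : ℝ) (hs : s ∈ Ioo (-(1/2):ℝ) (1/2)) :
    volume {x : E3 | x ∈ nonConvexDomain ∧ x 2 ≤ 1/2 + s}
      = ENNReal.ofReal (1/2 + s) - ENNReal.ofReal (s/4) := by
  obtain ⟨hs1, hs2⟩ := hs
  set c : ℝ := 1/2 + s with hc
  have hc0 : (0:ℝ) < c := by rw [hc]; linarith
  have hc1 : c < 1 := by rw [hc]; linarith
  set A : Set (Fin 3 → ℝ) := univ.pi ![Ioo (0:ℝ) 1, Ioo 0 1, Ioc 0 c] with hA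
  set B : Set (Fin 3 → ℝ) := univ.pi (fun _ => Ico (1/2:ℝ) 1) with hB
  have hpre : {x : E3 | x ∈ nonConvexDomain ∧ x 2 ≤ c}
      = (MeasurableEquiv.toLp 2 (Fin 3 → ℝ)).symm ⁻¹' (A \ B) := by
    ext x
    simp only [hA, hB, mem_preimage, mem_diff, Set.mem_pi, mem_univ, forall_true_left,
      MeasurableEquiv.coe_toLp_symm, mem_setOf_eq,
      nonConvexDomain, mem_diff, mem_setOf_eq]
    constructor
    · rintro ⟨⟨h1, h3⟩, h2⟩
      refine ⟨fun i => ?_, h3⟩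
      fin_cases i
      · exact h1 0
      · exact h1 1
      · exact ⟨(h1 2).1, h2⟩
    · rintro ⟨h1, h3⟩
      have h2 := h1 2
      simp only [Matrix.cons_val_two, Matrix.tail_cons, Matrix.head_cons] at h2
      refine ⟨⟨fun i => ?_, h3⟩, h2.2⟩
      fin_cases i
      · exact h1 0
      · exact h1 1
      · exact ⟨h2.1, lt_of_le_of_lt h2.2 hc1⟩
  rw [hpre, (EuclideanSpace.volume_preserving_symm_measurableEquiv_toLp (Fin 3)).measure_preimage_equiv]
  have hAB : A ∩ B = univ.pi ![Ico (1/2:ℝ) 1, Ico (1/2) 1, Icc (1/2) c] := by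
    rw [hA, hB, ← Set.pi_inter_distrib]
    apply Set.pi_congr rfl
    intro i _
    fin_cases i
    · show Ioo (0:ℝ) 1 ∩ Ico (1/2) 1 = Ico (1/2) 1
      exact Set.inter_eq_right.mpr fun y hy => ⟨lt_of_lt_of_le (by norm_num) hy.1, hy.2⟩
    · show Ioo (0:ℝ) 1 ∩ Ico (1/2) 1 = Ico (1/2) 1
      exact Set.inter_eq_right.mpr fun y hy => ⟨lt_of_lt_of_le (by norm_num) hy.1, hy.2⟩
    · show Ioc (0:ℝ) c ∩ Ico (1/2) 1 = Icc (1/2) c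
      ext y
      simp only [mem_inter_iff, mem_Ioc, mem_Ico, mem_Icc]
      constructor
      · rintro ⟨⟨-, h2⟩, h3, -⟩
        exact ⟨h3, h2⟩
      · rintro ⟨h1, h2⟩
        exact ⟨⟨by linarith, h2⟩, h1, by linarith⟩
  have hvA : volume A = ENNReal.ofReal c := by
    rw [hA, volume_pi_pi]
    simp [Fin.prod_univ_three, Real.volume_Ioo, Real.volume_Ioc]
  have hvAB : volume (A ∩ B) = ENNReal.ofReal (s/4) := by
    rw [hAB, volume_pi_pi]
    simp only [Fin.prod_univ_three, Matrix.cons_val_zero, Matrix.cons_val_one, Matrix.head_cons,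
      Matrix.cons_val_two, Matrix.tail_cons, Real.volume_Ico, Real.volume_Icc]
    rw [← ENNReal.ofReal_mul (by norm_num), ← ENNReal.ofReal_mul (by norm_num)]
    congr 1
    rw [hc]
    ring
  have hmAB : MeasurableSet (A ∩ B) := by
    rw [hAB]
    apply MeasurableSet.univ_pi
    intro i
    fin_cases i <;>
      simp only [Matrix.cons_val_zero, Matrix.cons_val_one, Matrix.head_cons,
        Matrix.cons_val_two, Matrix.tail_cons] <;>
      first | exact measurableSet_Ico | exact measurableSet_Icc
  rw [← Set.diff_self_inter,
    measure_diff inter_subset_left hmAB.nullMeasurableSet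
      (by rw [hvAB]; exact ENNReal.ofReal_ne_top),
    hvA, hvAB]

lemma cellVol_formula (s : ℝ) (hs : s ∈ Ioo (-(1/2):ℝ) (1/2)) :
    cellVol s = 1/2 + s - (1/4) * max s 0 := by
  have h := vol_slab s hs
  rw [cellVol, cell_eq, h]
  obtain ⟨hs1, hs2⟩ := hs
  rcases le_total s 0 with h0 | h0
  · rw [max_eq_right h0, (show ENNReal.ofReal (s/4) = 0 from ENNReal.ofReal_eq_zero.mpr (by linarith)), tsub_zero,
      ENNReal.toReal_ofReal (by linarith)]
    ring
  · rw [max_eq_left h0, ← ENNReal.ofReal_sub _ (by linarith),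
      ENNReal.toReal_ofReal (by linarith)]
    ring

/-- **Failure of differentiability of the Laguerre-cell volume map on non-convex domains**
(Remark 4.14, Counterexample 2, of Bourne, Egan, Pelloni, Wilkinson). -/
theorem laguerre_volume_not_differentiable_nonconvex :
    (∀ s ∈ Ioo (-(1/2) : ℝ) (1/2),
      lagCell nonConvexDomain (seedsVert s) ![0, 0] 0
        = {x : E3 | x ∈ nonConvexDomain ∧ x 2 ≤ 1/2 + s}) ∧
    (∀ s ∈ Ioc (-(1/2) : ℝ) 0, cellVol s = 1/2 + s) ∧
    (∀ s ∈ Ioo (0 : ℝ) (1/2), cellVol s = 1/2 + (3/4) * s) ∧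
    ¬ DifferentiableAt ℝ cellVol 0 := by
  refine ⟨fun s _ => cell_eq s, fun s hs => ?_, fun s hs => ?_, ?_⟩
  · rw [cellVol_formula s ⟨hs.1, by linarith [hs.2]⟩, max_eq_right hs.2]
    ring
  · rw [cellVol_formula s ⟨by linarith [hs.1], hs.2⟩, max_eq_left hs.1.le]
    ring
  · intro hdiff
    have hev : cellVol =ᶠ[𝓝 (0:ℝ)] fun t => 1/2 + t - (1/4) * max t 0 :=
      Filter.eventuallyEq_of_mem (isOpen_Ioo.mem_nhds (by norm_num)) cellVol_formula
    have h1 : DifferentiableAt ℝ (fun t : ℝ => 1/2 + t - (1/4) * max t 0) 0 :=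
      (hev.differentiableAt_iff).mp hdiff
    have h2 : DifferentiableAt ℝ (fun t : ℝ => max t 0) 0 := by
      have heq : (fun t : ℝ => max t 0)
          = fun t => (1/2 + t - (1/2 + t - (1/4) * max t 0)) * 4 := by
        ext t; ring
      rw [heq]
      exact (((differentiableAt_const _).add differentiableAt_id).sub h1).mul
        (differentiableAt_const _)
    have h3 : (abs : ℝ → ℝ) = fun t => 2 * max t 0 - t := by
      ext t
      rcases le_total t 0 with h | h
      · rw [abs_of_nonpos h, max_eq_right h]; ring
      · rw [abs_of_nonneg h, max_eq_left h]; ring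
    exact not_differentiableAt_abs_zero
      (h3 ▸ ((h2.const_mul 2).sub differentiableAt_id))
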